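/- Let f be the multiplicative arithmetic function determined (for fixed positive integers m, n) by f(p^k) = -p^{1-3k} for primes p not dividing mn, f(p^k) = p^{-3k} for p | n, and f(p^k) = -(p-1) * p^{-3k} for p | m with p ∤ n (k ≥ 1). Then ∑_{d=1}^∞ f(d) converges absolutely and equals ∏_{p ∤ mn} (p^3 - p - 1)/(p^3 - 1) * ∏_{p | n} p^3/(p^3 - 1) * ∏_{p | m, p ∤ n} (p^3 - p)/(p^3 - 1). -/

import Mathlib

open Finset

private lemma geomSum (p : ℕ) (hp : p.Prime) (g : ℕ → ℝ) (h0 : g (p ^ 0) = 1)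
    (c : ℝ) (hc : ∀ k, 1 ≤ k → g (p ^ k) = c * (((p : ℝ) ^ 3)⁻¹) ^ k) :
    HasSum (fun e : ℕ => g (p ^ e)) (1 + c / ((p : ℝ) ^ 3 - 1)) := by
  have hp2 : (2 : ℝ) ≤ (p : ℝ) := by exact_mod_cast hp.two_le
  have hp3 : (8 : ℝ) ≤ (p : ℝ) ^ 3 := by
    have := pow_le_pow_left₀ (by norm_num : (0:ℝ) ≤ 2) hp2 3
    norm_num at this
    linarith
  set x : ℝ := ((p : ℝ) ^ 3)⁻¹ with hx
  have hx0 : 0 ≤ x := by positivity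
  have hx1 : x < 1 := by
    rw [hx, inv_lt_one_iff₀]; right; linarith
  have hgeo : HasSum (fun k : ℕ => (c * x) * x ^ k) ((c * x) * (1 - x)⁻¹) :=
    (hasSum_geometric_of_lt_one hx0 hx1).mul_left _
  have heq : (fun k : ℕ => g (p ^ (k + 1))) = fun k : ℕ => (c * x) * x ^ k := by
    funext k
    rw [hc (k + 1) (by omega), pow_succ]
    ring
  have hval : (c * x) * (1 - x)⁻¹ =
      (1 + c / ((p : ℝ) ^ 3 - 1)) - ∑ i ∈ Finset.range 1, g (p ^ i) := by
    rw [Finset.sum_range_one, h0, hx]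
    have h1 : (p : ℝ) ^ 3 ≠ 0 := by positivity
    have h2 : (p : ℝ) ^ 3 - 1 ≠ 0 := by nlinarith
    field_simp
    ring
  have hshift : HasSum (fun k : ℕ => g (p ^ (k + 1)))
      ((1 + c / ((p : ℝ) ^ 3 - 1)) - ∑ i ∈ Finset.range 1, g (p ^ i)) := by
    rw [heq, ← hval]; exact hgeo
  exact (hasSum_nat_add_iff' 1).mp hshift

theorem euler_product_of_multiplicative_f
    (m n : ℕ) (hm : 0 < m) (hn : 0 < n)
    (f : ℕ → ℝ) (hf1 : f 1 = 1)
    (hfmul : ∀ a b : ℕ, Nat.Coprime a b → f (a * b) = f a * f b)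
    (hf_nmid : ∀ p k : ℕ, p.Prime → 1 ≤ k → ¬ p ∣ m * n →
      f (p ^ k) = -(p : ℝ) ^ ((1 : ℤ) - 3 * k))
    (hf_n : ∀ p k : ℕ, p.Prime → 1 ≤ k → p ∣ n →
      f (p ^ k) = (p : ℝ) ^ (-(3 : ℤ) * k))
    (hf_m : ∀ p k : ℕ, p.Prime → 1 ≤ k → p ∣ m → ¬ p ∣ n →
      f (p ^ k) = -((p : ℝ) - 1) * (p : ℝ) ^ (-(3 : ℤ) * k)) :
    Summable (fun d : ℕ+ => |f d|) ∧
    HasSum (fun d : ℕ+ => f d)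
      ((∏' p : Nat.Primes,
          (if (p : ℕ) ∣ m * n then 1
            else (((p : ℕ) : ℝ) ^ 3 - (p : ℕ) - 1) / (((p : ℕ) : ℝ) ^ 3 - 1)))
        * (∏ p ∈ n.primeFactors, ((p : ℝ) ^ 3 / ((p : ℝ) ^ 3 - 1)))
        * ∏ p ∈ m.primeFactors \ n.primeFactors,
            (((p : ℝ) ^ 3 - p) / ((p : ℝ) ^ 3 - 1))) := by
  classical
  -- basic facts about prime values
  have hcast : ∀ p k : ℕ, p.Prime → (((p ^ k : ℕ) : ℝ) ^ 2)⁻¹ = (p : ℝ) ^ (-(2 * k) : ℤ) := by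
    intro p k hp
    have : (-(2 * (k : ℤ))) = -((k * 2 : ℕ) : ℤ) := by push_cast; ring
    rw [show (-(2 * (k : ℤ))) = -(((k * 2 : ℕ)) : ℤ) by push_cast; ring,
      zpow_neg, zpow_natCast, pow_mul]
    push_cast
    ring_nf
  -- the bound |f N| ≤ N⁻²
  have hbound : ∀ N : ℕ, 0 < N → |f N| ≤ (((N : ℝ)) ^ 2)⁻¹ := by
    intro N
    induction N using Nat.recOnPosPrimePosCoprime with
    | prime_pow p k hp hk =>
      intro _
      have hp' : p.Prime := hp
      have hq2 : (2 : ℝ) ≤ (p : ℝ) := by exact_mod_cast hp'.two_le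
      have hq0 : (0 : ℝ) < p := by linarith
      have hq1 : (1 : ℝ) ≤ p := by linarith
      rw [hcast p k hp']
      by_cases hpn : p ∣ n
      · rw [hf_n p k hp' hk hpn, abs_of_pos (zpow_pos hq0 _)]
        exact zpow_le_zpow_right₀ hq1 (by omega)
      · by_cases hpm : p ∣ m
        · rw [hf_m p k hp' hk hpm hpn]
          have h1 : |-((p : ℝ) - 1) * (p : ℝ) ^ (-(3 : ℤ) * k)| =
              ((p : ℝ) - 1) * (p : ℝ) ^ (-(3 : ℤ) * k) := by
            rw [abs_mul, abs_of_pos (zpow_pos hq0 _), abs_neg, abs_of_pos (by linarith)]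
          rw [h1]
          have h2 : ((p : ℝ) - 1) * (p : ℝ) ^ (-(3 : ℤ) * k) ≤
              (p : ℝ) * (p : ℝ) ^ (-(3 : ℤ) * k) := by
            have := zpow_pos hq0 (-(3 : ℤ) * k)
            nlinarith
          refine h2.trans ?_
          calc (p : ℝ) * (p : ℝ) ^ (-(3 : ℤ) * k) = (p : ℝ) ^ ((1 : ℤ) + -(3 : ℤ) * k) := by
                rw [zpow_add₀ (by positivity : (p:ℝ) ≠ 0), zpow_one]
            _ ≤ (p : ℝ) ^ (-(2 * k) : ℤ) := zpow_le_zpow_right₀ hq1 (by omega)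
        · have hpmn : ¬ p ∣ m * n := by
            rw [hp'.dvd_mul]; tauto
          rw [hf_nmid p k hp' hk hpmn, abs_neg, abs_of_pos (zpow_pos hq0 _)]
          exact zpow_le_zpow_right₀ hq1 (by omega)
    | zero => intro h; omega
    | one =>
      intro _
      simp [hf1]
    | coprime a b ha hb hab iha ihb =>
      intro _
      rw [hfmul a b hab, abs_mul]
      have h1 := iha (by omega)
      have h2 := ihb (by omega)
      have := mul_le_mul h1 h2 (abs_nonneg _) (by positivity)
      refine this.trans (le_of_eq ?_)
      push_cast
      rw [mul_pow, mul_inv]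
  -- g : f extended by 0 at 0
  set g : ℕ → ℝ := fun d => if d = 0 then 0 else f d with hgdef
  have hg0 : g 0 = 0 := rfl
  have hg1 : g 1 = 1 := by simp [hgdef, hf1]
  have hgf : ∀ d : ℕ, 0 < d → g d = f d := by
    intro d hd; simp [hgdef, hd.ne']
  have hgmul : ∀ {a b : ℕ}, Nat.Coprime a b → g (a * b) = g a * g b := by
    intro a b hab
    rcases Nat.eq_zero_or_pos a with rfl | ha
    · have : b = 1 := by simpa using hab
      subst this; simp [hg0, hg1]
    rcases Nat.eq_zero_or_pos b with rfl | hb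
    · have : a = 1 := by simpa [Nat.coprime_zero_right] using hab
      subst this; simp [hg0, hg1]
    rw [hgf _ (by positivity), hgf _ ha, hgf _ hb, hfmul a b hab]
  have hboundg : ∀ N : ℕ, ‖g N‖ ≤ (((N : ℝ)) ^ 2)⁻¹ := by
    intro N
    rcases Nat.eq_zero_or_pos N with rfl | hN
    · simp [hg0]
    · rw [hgf N hN]; exact hbound N hN
  have hsummand : Summable (fun N : ℕ => (((N : ℝ)) ^ 2)⁻¹) :=
    Real.summable_nat_pow_inv.mpr one_lt_two
  have hsum : Summable (fun N : ℕ => ‖g N‖) :=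
    Summable.of_nonneg_of_le (fun _ => norm_nonneg _) hboundg hsummand
  -- The indicator-restricted function g1
  set g1 : ℕ → ℝ := fun d => if Nat.Coprime d (m * n) then g d else 0 with hg1def
  have hg10 : g1 0 = 0 := by simp [hg1def, hg0]
  have hg11 : g1 1 = 1 := by simp [hg1def, hg1, Nat.coprime_one_left]
  have hg1mul : ∀ {a b : ℕ}, Nat.Coprime a b → g1 (a * b) = g1 a * g1 b := by
    intro a b hab
    simp only [hg1def]
    by_cases h1 : Nat.Coprime a (m * n) <;> by_cases h2 : Nat.Coprime b (m * n)
    · rw [if_pos h1, if_pos h2, if_pos (Nat.coprime_mul_iff_left.mpr ⟨h1, h2⟩), hgmul hab]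
    · rw [if_pos h1, if_neg h2, if_neg (fun h => h2 (Nat.coprime_mul_iff_left.mp h).2), mul_zero]
    · rw [if_neg h1, if_pos h2, if_neg (fun h => h1 (Nat.coprime_mul_iff_left.mp h).1), zero_mul]
    · rw [if_neg h1, if_neg h2, if_neg (fun h => h1 (Nat.coprime_mul_iff_left.mp h).1), mul_zero]
  have hsum1 : Summable (fun N : ℕ => ‖g1 N‖) := by
    refine Summable.of_nonneg_of_le (fun _ => norm_nonneg _) (fun N => ?_) hsum
    simp only [hg1def]
    by_cases h : Nat.Coprime N (m * n)
    · rw [if_pos h]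
    · rw [if_neg h]
      simp [norm_nonneg]
  -- Euler products
  have hEuler : HasProd (fun p : Nat.Primes => ∑' e : ℕ, g ((p : ℕ) ^ e)) (∑' k, g k) :=
    EulerProduct.eulerProduct_hasProd hg1 hgmul hsum hg0
  have hEuler1 : HasProd (fun p : Nat.Primes => ∑' e : ℕ, g1 ((p : ℕ) ^ e)) (∑' k, g1 k) :=
    EulerProduct.eulerProduct_hasProd hg11 hg1mul hsum1 hg10
  -- helper facts for a prime p
  have hcube : ∀ p : ℕ, p.Prime → (8 : ℝ) ≤ (p : ℝ) ^ 3 := by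
    intro p hp
    have h2 : (2 : ℝ) ≤ (p : ℝ) := by exact_mod_cast hp.two_le
    have := pow_le_pow_left₀ (by norm_num : (0:ℝ) ≤ 2) h2 3
    norm_num at this
    linarith
  have hpow : ∀ p : ℕ, p.Prime → ∀ k : ℕ,
      (p : ℝ) ^ (-(3 : ℤ) * k) = (((p : ℝ) ^ 3)⁻¹) ^ k := by
    intro p hp k
    rw [inv_pow, ← pow_mul, ← zpow_natCast (p : ℝ) (3 * k), ← zpow_neg]
    congr 1
  have hpow1 : ∀ p : ℕ, p.Prime → ∀ k : ℕ,
      (p : ℝ) ^ ((1 : ℤ) - 3 * k) = (p : ℝ) * (((p : ℝ) ^ 3)⁻¹) ^ k := by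
    intro p hp k
    have hp0 : (p : ℝ) ≠ 0 := by
      have := hp.two_le; positivity
    rw [sub_eq_add_neg, zpow_add₀ hp0, zpow_one, show (-(3 * (k:ℤ))) = -(3:ℤ) * k by ring,
      hpow p hp k]
  have hgp0 : ∀ p : ℕ, p.Prime → g (p ^ 0) = 1 := by
    intro p hp; rw [pow_zero]; exact hg1
  -- the three per-prime sums for g
  have hSum_n : ∀ p : ℕ, p.Prime → p ∣ n →
      HasSum (fun e : ℕ => g (p ^ e)) ((p : ℝ) ^ 3 / ((p : ℝ) ^ 3 - 1)) := by
    intro p hp hpn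
    have h8 := hcube p hp
    have hne : (p : ℝ) ^ 3 - 1 ≠ 0 := by intro h; nlinarith
    have hval : (p : ℝ) ^ 3 / ((p : ℝ) ^ 3 - 1) = 1 + 1 / ((p : ℝ) ^ 3 - 1) := by
      field_simp
      ring
    rw [hval]
    refine geomSum p hp g (hgp0 p hp) 1 ?_
    intro k hk
    rw [hgf _ (pow_pos hp.pos k), hf_n p k hp hk hpn, one_mul, hpow p hp k]
  have hSum_m : ∀ p : ℕ, p.Prime → p ∣ m → ¬ p ∣ n →
      HasSum (fun e : ℕ => g (p ^ e)) (((p : ℝ) ^ 3 - p) / ((p : ℝ) ^ 3 - 1)) := by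
    intro p hp hpm hpn
    have h8 := hcube p hp
    have hne : (p : ℝ) ^ 3 - 1 ≠ 0 := by intro h; nlinarith
    have hval : ((p : ℝ) ^ 3 - p) / ((p : ℝ) ^ 3 - 1)
        = 1 + (-((p : ℝ) - 1)) / ((p : ℝ) ^ 3 - 1) := by
      field_simp
      ring
    rw [hval]
    refine geomSum p hp g (hgp0 p hp) _ ?_
    intro k hk
    rw [hgf _ (pow_pos hp.pos k), hf_m p k hp hk hpm hpn, hpow p hp k]
  have hSum_e : ∀ p : ℕ, p.Prime → ¬ p ∣ m * n →
      HasSum (fun e : ℕ => g (p ^ e)) (((p : ℝ) ^ 3 - p - 1) / ((p : ℝ) ^ 3 - 1)) := by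
    intro p hp hpmn
    have h8 := hcube p hp
    have hne : (p : ℝ) ^ 3 - 1 ≠ 0 := by intro h; nlinarith
    have hval : ((p : ℝ) ^ 3 - p - 1) / ((p : ℝ) ^ 3 - 1)
        = 1 + (-(p : ℝ)) / ((p : ℝ) ^ 3 - 1) := by
      field_simp
      ring
    rw [hval]
    refine geomSum p hp g (hgp0 p hp) _ ?_
    intro k hk
    rw [hgf _ (pow_pos hp.pos k), hf_nmid p k hp hk hpmn, hpow1 p hp k]
    ring
  -- per-prime sums for g1
  have hSum1 : ∀ p : ℕ, p.Prime →
      HasSum (fun e : ℕ => g1 (p ^ e))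
        (if p ∣ m * n then 1 else ((p : ℝ) ^ 3 - p - 1) / ((p : ℝ) ^ 3 - 1)) := by
    intro p hp
    by_cases hpmn : p ∣ m * n
    · rw [if_pos hpmn]
      have hz : ∀ k : ℕ, 1 ≤ k → g1 (p ^ k) = 0 := by
        intro k hk
        rw [hg1def]
        simp only
        rw [if_neg]
        intro hco
        exact (hp.coprime_iff_not_dvd.mp
          (Nat.Coprime.coprime_dvd_left (dvd_pow_self p (by omega)) hco)) hpmn
      have hg1p0 : g1 (p ^ 0) = 1 := by rw [pow_zero]; exact hg11
      have := geomSum p hp g1 hg1p0 0 (by intro k hk; rw [hz k hk, zero_mul])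
      simpa using this
    · rw [if_neg hpmn]
      have hco : ∀ e : ℕ, g1 (p ^ e) = g (p ^ e) := by
        intro e
        rw [hg1def]
        simp only
        rw [if_pos (Nat.Coprime.pow_left e (hp.coprime_iff_not_dvd.mpr hpmn))]
      simp only [hco]
      exact hSum_e p hp hpmn
  -- Euler factor for g1 matches statement's tprod argument
  have h1 : HasProd (fun p : Nat.Primes =>
      (if (p : ℕ) ∣ m * n then (1 : ℝ)
        else (((p : ℕ) : ℝ) ^ 3 - (p : ℕ) - 1) / (((p : ℕ) : ℝ) ^ 3 - 1))) (∑' k, g1 k) := by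
    have heq : (fun p : Nat.Primes => ∑' e : ℕ, g1 ((p : ℕ) ^ e)) =
        fun p : Nat.Primes => (if (p : ℕ) ∣ m * n then (1 : ℝ)
          else (((p : ℕ) : ℝ) ^ 3 - (p : ℕ) - 1) / (((p : ℕ) : ℝ) ^ 3 - 1)) := by
      funext p
      rw [(hSum1 (p : ℕ) p.prop).tsum_eq]
    rw [← heq]
    exact hEuler1
  have h2 : HasProd (fun p : Nat.Primes =>
      (if (p : ℕ) ∣ n then ((p : ℕ) : ℝ) ^ 3 / (((p : ℕ) : ℝ) ^ 3 - 1) else 1))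
      (∏ p ∈ n.primeFactors, ((p : ℝ) ^ 3 / ((p : ℝ) ^ 3 - 1))) := by
    set F2 : ℕ → ℝ := fun q => if q ∈ n.primeFactors then (q : ℝ) ^ 3 / ((q : ℝ) ^ 3 - 1) else 1
      with hF2def
    have hF2 : HasProd F2 (∏ p ∈ n.primeFactors, ((p : ℝ) ^ 3 / ((p : ℝ) ^ 3 - 1))) := by
      have h := hasProd_prod_of_ne_finset_one (s := n.primeFactors) (f := F2)
        (L := SummationFilter.unconditional _)
        (fun b hb => if_neg hb)
      have he : ∏ b ∈ n.primeFactors, F2 b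
          = ∏ p ∈ n.primeFactors, ((p : ℝ) ^ 3 / ((p : ℝ) ^ 3 - 1)) :=
        Finset.prod_congr rfl (fun b hb => if_pos hb)
      rwa [he] at h
    have hco : (fun p : Nat.Primes =>
        (if (p : ℕ) ∣ n then ((p : ℕ) : ℝ) ^ 3 / (((p : ℕ) : ℝ) ^ 3 - 1) else 1))
        = F2 ∘ (fun p : Nat.Primes => (p : ℕ)) := by
      funext p
      simp only [Function.comp, hF2def]
      by_cases hpn : (p : ℕ) ∣ n
      · rw [if_pos hpn, if_pos (Nat.mem_primeFactors.mpr ⟨p.prop, hpn, hn.ne'⟩)]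
      · rw [if_neg hpn, if_neg (fun hmem => hpn (Nat.mem_primeFactors.mp hmem).2.1)]
    rw [hco]
    refine (Function.Injective.hasProd_iff (fun a b hab => Subtype.ext hab) ?_).mpr hF2
    intro q hq
    rw [hF2def]
    simp only
    rw [if_neg]
    intro hmem
    exact hq ⟨⟨q, (Nat.mem_primeFactors.mp hmem).1⟩, rfl⟩
  have h3 : HasProd (fun p : Nat.Primes =>
      (if (p : ℕ) ∣ m ∧ ¬ (p : ℕ) ∣ n
        then (((p : ℕ) : ℝ) ^ 3 - (p : ℕ)) / (((p : ℕ) : ℝ) ^ 3 - 1) else 1))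
      (∏ p ∈ m.primeFactors \ n.primeFactors, (((p : ℝ) ^ 3 - p) / ((p : ℝ) ^ 3 - 1))) := by
    set F3 : ℕ → ℝ := fun q => if q ∈ m.primeFactors \ n.primeFactors
        then ((q : ℝ) ^ 3 - q) / ((q : ℝ) ^ 3 - 1) else 1 with hF3def
    have hF3 : HasProd F3
        (∏ p ∈ m.primeFactors \ n.primeFactors, (((p : ℝ) ^ 3 - p) / ((p : ℝ) ^ 3 - 1))) := by
      have h := hasProd_prod_of_ne_finset_one (s := m.primeFactors \ n.primeFactors) (f := F3)
        (L := SummationFilter.unconditional _)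
        (fun b hb => if_neg hb)
      have he : ∏ b ∈ m.primeFactors \ n.primeFactors, F3 b
          = ∏ p ∈ m.primeFactors \ n.primeFactors, (((p : ℝ) ^ 3 - p) / ((p : ℝ) ^ 3 - 1)) :=
        Finset.prod_congr rfl (fun b hb => if_pos hb)
      rwa [he] at h
    have hco : (fun p : Nat.Primes =>
        (if (p : ℕ) ∣ m ∧ ¬ (p : ℕ) ∣ n
          then (((p : ℕ) : ℝ) ^ 3 - (p : ℕ)) / (((p : ℕ) : ℝ) ^ 3 - 1) else 1))
        = F3 ∘ (fun p : Nat.Primes => (p : ℕ)) := by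
      funext p
      simp only [Function.comp, hF3def]
      by_cases hpm : (p : ℕ) ∣ m ∧ ¬ (p : ℕ) ∣ n
      · rw [if_pos hpm, if_pos (Finset.mem_sdiff.mpr
          ⟨Nat.mem_primeFactors.mpr ⟨p.prop, hpm.1, hm.ne'⟩,
            fun hmem => hpm.2 (Nat.mem_primeFactors.mp hmem).2.1⟩)]
      · rw [if_neg hpm, if_neg]
        intro hmem
        rcases Finset.mem_sdiff.mp hmem with ⟨h5, h6⟩
        exact hpm ⟨(Nat.mem_primeFactors.mp h5).2.1,
          fun hdn => h6 (Nat.mem_primeFactors.mpr ⟨p.prop, hdn, hn.ne'⟩)⟩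
    rw [hco]
    refine (Function.Injective.hasProd_iff (fun a b hab => Subtype.ext hab) ?_).mpr hF3
    intro q hq
    rw [hF3def]
    simp only
    rw [if_neg]
    intro hmem
    exact hq ⟨⟨q, (Nat.mem_primeFactors.mp (Finset.mem_sdiff.mp hmem).1).1⟩, rfl⟩
  -- the pointwise identity between Euler factors
  have hpoint : (fun p : Nat.Primes => ∑' e : ℕ, g ((p : ℕ) ^ e)) =
      fun p : Nat.Primes =>
        (if (p : ℕ) ∣ m * n then (1 : ℝ)
          else (((p : ℕ) : ℝ) ^ 3 - (p : ℕ) - 1) / (((p : ℕ) : ℝ) ^ 3 - 1))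
        * (if (p : ℕ) ∣ n then ((p : ℕ) : ℝ) ^ 3 / (((p : ℕ) : ℝ) ^ 3 - 1) else 1)
        * (if (p : ℕ) ∣ m ∧ ¬ (p : ℕ) ∣ n
            then (((p : ℕ) : ℝ) ^ 3 - (p : ℕ)) / (((p : ℕ) : ℝ) ^ 3 - 1) else 1) := by
    funext p
    by_cases hpn : (p : ℕ) ∣ n
    · rw [(hSum_n (p : ℕ) p.prop hpn).tsum_eq, if_pos (Dvd.dvd.mul_left hpn m), if_pos hpn,
        if_neg (fun h => h.2 hpn), one_mul, mul_one]
    · by_cases hpm : (p : ℕ) ∣ m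
      · rw [(hSum_m (p : ℕ) p.prop hpm hpn).tsum_eq, if_pos (Dvd.dvd.mul_right hpm n),
          if_neg hpn, if_pos ⟨hpm, hpn⟩, one_mul, one_mul]
      · have hpmn : ¬ (p : ℕ) ∣ m * n := by
          rw [Nat.Prime.dvd_mul p.prop]; tauto
        rw [(hSum_e (p : ℕ) p.prop hpmn).tsum_eq, if_neg hpmn, if_neg hpn,
          if_neg (fun h => hpm h.1), mul_one, mul_one]
  have hTotal : HasProd (fun p : Nat.Primes => ∑' e : ℕ, g ((p : ℕ) ^ e))
      ((∑' k, g1 k)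
        * (∏ p ∈ n.primeFactors, ((p : ℝ) ^ 3 / ((p : ℝ) ^ 3 - 1)))
        * ∏ p ∈ m.primeFactors \ n.primeFactors,
            (((p : ℝ) ^ 3 - p) / ((p : ℝ) ^ 3 - 1))) := by
    rw [hpoint]
    exact (h1.mul h2).mul h3
  have hT : (∑' k, g k) = (∑' k, g1 k)
      * (∏ p ∈ n.primeFactors, ((p : ℝ) ^ 3 / ((p : ℝ) ^ 3 - 1)))
      * ∏ p ∈ m.primeFactors \ n.primeFactors,
          (((p : ℝ) ^ 3 - p) / ((p : ℝ) ^ 3 - 1)) := hEuler.unique hTotal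
  have htp : (∏' p : Nat.Primes,
      (if (p : ℕ) ∣ m * n then (1 : ℝ)
        else (((p : ℕ) : ℝ) ^ 3 - (p : ℕ) - 1) / (((p : ℕ) : ℝ) ^ 3 - 1))) = ∑' k, g1 k :=
    h1.tprod_eq
  have hinj : Function.Injective (fun d : ℕ+ => (d : ℕ)) :=
    fun a b hab => PNat.coe_injective hab
  constructor
  · have hsc := hsum.comp_injective hinj
    refine hsc.congr (fun d => ?_)
    simp only [Function.comp]
    rw [hgf _ d.pos, Real.norm_eq_abs]
  · rw [htp]
    have hgsum : HasSum g ((∑' k, g1 k)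
        * (∏ p ∈ n.primeFactors, ((p : ℝ) ^ 3 / ((p : ℝ) ^ 3 - 1)))
        * ∏ p ∈ m.primeFactors \ n.primeFactors,
            (((p : ℝ) ^ 3 - p) / ((p : ℝ) ^ 3 - 1))) := hT ▸ hsum.of_norm.hasSum
    have hrange : ∀ x ∉ Set.range (fun d : ℕ+ => (d : ℕ)), g x = 0 := by
      intro x hx
      rcases Nat.eq_zero_or_pos x with rfl | hx0
      · exact hg0
      · exact absurd ⟨⟨x, hx0⟩, rfl⟩ hx
    have hc := (Function.Injective.hasSum_iff hinj hrange).mpr hgsum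
    have hfg : (fun d : ℕ+ => f (d : ℕ)) = (g ∘ fun d : ℕ+ => (d : ℕ)) :=
      funext fun d => (hgf _ d.pos).symm
    rw [hfg]
    exact hc
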